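/- arXiv:2311.17701 — 4 statements merged into one kernel-verified Lean document; each statement's English description precedes it below -/
import Mathlib

section
/- Formal core of the Main Criterion (Runge's method): Given abstract Runge data (Φ, n, s, h, m, q, C) and in addition a real number τ with 0 ≤ τ < 1 such that (H4) for all x ∈ Φ, all i ∈ Fin s and all j ∈ Fin n one has q i x ≤ τ * h j x + C, there exists a constant C' ∈ ℝ such that for every x ∈ Φ one has min_{j ∈ Fin n} h j x ≤ C'. -/
/-- **Formal core of the Main Criterion (Runge's method).**
Given abstract Runge data `(Φ, n, s, h, m, q, C)` satisfying (H1)–(H3), together with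
`0 ≤ τ < 1` satisfying (H4): `q i x ≤ τ * h j x + C` for all `x, i, j`, there is a
constant `C'` such that `min_{j ∈ Fin n} h j x ≤ C'` for every `x ∈ Φ`. -/
theorem runge_main_criterion
    (Φ : Type*) (n s : ℕ) (hn : 1 ≤ n) (hs : 1 ≤ s)
    (h m : Fin n → Φ → ℝ) (q : Fin s → Φ → ℝ)
    (C : ℝ) (hC : 0 ≤ C)
    (H1 : ∀ x : Φ, ∀ j : Fin n, |h j x - m j x| ≤ C)
    (H2 : ∀ x : Φ, (∀ i : Fin s, -C ≤ q i x) ∧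
      ∃ i0 : Fin s, ∀ i : Fin s, i ≠ i0 → q i x ≤ C)
    (H3 : ∀ x : Φ, |(∑ i : Fin s, q i x) -
      Finset.univ.inf' ⟨⟨0, hn⟩, Finset.mem_univ _⟩ (fun j => m j x)| ≤ C)
    (τ : ℝ) (hτ0 : 0 ≤ τ) (hτ1 : τ < 1)
    (H4 : ∀ x : Φ, ∀ i : Fin s, ∀ j : Fin n, q i x ≤ τ * h j x + C) :
    ∃ C' : ℝ, ∀ x : Φ,
      Finset.univ.inf' ⟨⟨0, hn⟩, Finset.mem_univ _⟩ (fun j => h j x) ≤ C' := by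
  refine ⟨((s : ℝ) + 3) * C / (1 - τ), fun x => ?_⟩
  have h1τ : (0:ℝ) < 1 - τ := by linarith
  set M := Finset.univ.inf' ⟨⟨0, hn⟩, Finset.mem_univ _⟩ (fun j => h j x) with hM
  -- min m ≥ M - C
  have hMm : M - C ≤ Finset.univ.inf' ⟨⟨0, hn⟩, Finset.mem_univ _⟩ (fun j => m j x) := by
    apply Finset.le_inf'
    intro j _
    have h1 := H1 x j
    have h2 : M ≤ h j x := Finset.inf'_le _ (Finset.mem_univ j)
    have := abs_le.mp h1
    linarith [this.1, this.2]
  -- sum q ≥ M - 2C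
  have hsum : M - 2 * C ≤ ∑ i : Fin s, q i x := by
    have := abs_le.mp (H3 x)
    linarith [this.1]
  obtain ⟨i0, hi0⟩ := (H2 x).2
  -- sum over erase i0 bounded by s * C
  have herase : ∑ i ∈ Finset.univ.erase i0, q i x ≤ (s : ℝ) * C := by
    calc ∑ i ∈ Finset.univ.erase i0, q i x
        ≤ (Finset.univ.erase i0).card • C := by
          apply Finset.sum_le_card_nsmul
          intro i hi
          exact hi0 i (Finset.mem_erase.mp hi).1
      _ = ((Finset.univ.erase i0).card : ℝ) * C := by simp [nsmul_eq_mul]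
      _ ≤ (s : ℝ) * C := by
          apply mul_le_mul_of_nonneg_right _ hC
          exact_mod_cast Finset.card_le_card (Finset.erase_subset _ _) |>.trans
            (by simp [Finset.card_univ])
  have hsplit : q i0 x + ∑ i ∈ Finset.univ.erase i0, q i x = ∑ i : Fin s, q i x :=
    Finset.add_sum_erase _ (fun i => q i x) (Finset.mem_univ i0)
  -- q i0 ≤ τ M + C
  obtain ⟨j1, _, hj1⟩ := Finset.exists_mem_eq_inf' ⟨⟨0, hn⟩, Finset.mem_univ _⟩
    (fun j => h j x)
  have hqi0 : q i0 x ≤ τ * M + C := by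
    have := H4 x i0 j1
    rw [hM, hj1]
    exact this
  have key : M * (1 - τ) ≤ ((s : ℝ) + 3) * C := by nlinarith
  rw [le_div_iff₀ h1τ]
  linarith
end

section
/- Finiteness form of the Main Criterion: Given abstract Runge data (Φ, n, s, h, m, q, C), a real number τ with 0 ≤ τ < 1 satisfying (H4) for all x ∈ Φ, all i ∈ Fin s and all j ∈ Fin n, q i x ≤ τ * h j x + C, and assuming in addition the Northcott property that for every j ∈ Fin n and every real B the set {x ∈ Φ : h j x ≤ B} is finite, the type Φ is finite. -/
/-- **Finiteness form of the Main Criterion.**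
Given abstract Runge data `(Φ, n, s, h, m, q, C)` satisfying (H1)–(H3), together with
`0 ≤ τ < 1` satisfying (H4), and the Northcott property that for every `j` and every
bound `B` the set `{x ∈ Φ : h j x ≤ B}` is finite, the type `Φ` is finite. -/
theorem runge_main_criterion_finiteness
    (Φ : Type*) (n s : ℕ) (hn : 1 ≤ n) (hs : 1 ≤ s)
    (h m : Fin n → Φ → ℝ) (q : Fin s → Φ → ℝ)
    (C : ℝ) (hC : 0 ≤ C)
    (H1 : ∀ x : Φ, ∀ j : Fin n, |h j x - m j x| ≤ C)
    (H2 : ∀ x : Φ, (∀ i : Fin s, -C ≤ q i x) ∧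
      ∃ i0 : Fin s, ∀ i : Fin s, i ≠ i0 → q i x ≤ C)
    (H3 : ∀ x : Φ, |(∑ i : Fin s, q i x) -
      Finset.univ.inf' ⟨⟨0, hn⟩, Finset.mem_univ _⟩ (fun j => m j x)| ≤ C)
    (τ : ℝ) (hτ0 : 0 ≤ τ) (hτ1 : τ < 1)
    (H4 : ∀ x : Φ, ∀ i : Fin s, ∀ j : Fin n, q i x ≤ τ * h j x + C)
    (Northcott : ∀ j : Fin n, ∀ B : ℝ, {x : Φ | h j x ≤ B}.Finite) :
    Finite Φ := by
  set B : ℝ := ((s : ℝ) + 2) * C / (1 - τ) with hB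
  rw [← Set.finite_univ_iff]
  refine Set.Finite.subset (Set.finite_iUnion (fun j : Fin n => Northcott j B)) ?_
  intro x _
  obtain ⟨jx, -, hjx⟩ := Finset.exists_mem_eq_inf' (⟨⟨0, hn⟩, Finset.mem_univ _⟩ :
    Finset.univ.Nonempty) (fun j => m j x)
  simp only [Set.mem_iUnion, Set.mem_setOf_eq]
  refine ⟨jx, ?_⟩
  have h1 : h jx x ≤ m jx x + C := by
    have := abs_le.mp (H1 x jx); linarith [this.2]
  have h3 : m jx x ≤ (∑ i : Fin s, q i x) + C := by
    have := abs_le.mp (H3 x); rw [← hjx]; linarith [this.1]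
  obtain ⟨hlow, i0, hup⟩ := H2 x
  have hsum : ∑ i : Fin s, q i x ≤ q i0 x + ((s : ℝ) - 1) * C := by
    have : ∑ i : Fin s, q i x = q i0 x + ∑ i ∈ Finset.univ.erase i0, q i x := by
      rw [add_comm, Finset.sum_erase_add _ _ (Finset.mem_univ i0)]
    rw [this]
    have hcard : (Finset.univ.erase i0).card = s - 1 := by
      simp [Finset.card_erase_of_mem]
    have : ∑ i ∈ Finset.univ.erase i0, q i x ≤ ((s : ℝ) - 1) * C := by
      calc ∑ i ∈ Finset.univ.erase i0, q i x
          ≤ ∑ _i ∈ Finset.univ.erase i0, C := by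
            refine Finset.sum_le_sum fun i hi => hup i (Finset.mem_erase.mp hi).1
        _ = ((s : ℝ) - 1) * C := by
            rw [Finset.sum_const, hcard, nsmul_eq_mul, Nat.cast_sub hs]; push_cast; ring
    linarith
  have h4 : q i0 x ≤ τ * h jx x + C := H4 x i0 jx
  have key : (1 - τ) * h jx x ≤ ((s : ℝ) + 2) * C := by nlinarith
  rw [hB]
  rw [le_div_iff₀ (by linarith)]
  linarith
end

section
/- Key intermediate step of the Main Criterion: Given abstract Runge data (Φ, n, s, h, m, q, C), for every x ∈ Φ there exist indices j0 ∈ Fin n and i0 ∈ Fin s such that m j0 x = min_{j ∈ Fin n} m j x and |h j0 x − q i0 x| ≤ (2*n + s) * C; that is, the height of x relative to the divisor component to which x is closest equals, up to a bounded error, the proximity of x to a single component of the intersection ∩_j D_j. -/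
/-- **Key intermediate step of the Main Criterion.**
Given abstract Runge data `(Φ, n, s, h, m, q, C)` satisfying (H1)–(H3), for every
`x ∈ Φ` there are indices `j0 ∈ Fin n` and `i0 ∈ Fin s` such that
`m j0 x = min_{j} m j x` and `|h j0 x - q i0 x| ≤ (2n + s) * C`. -/
theorem runge_key_intermediate_step
    (Φ : Type*) (n s : ℕ) (hn : 1 ≤ n) (hs : 1 ≤ s)
    (h m : Fin n → Φ → ℝ) (q : Fin s → Φ → ℝ)
    (C : ℝ) (hC : 0 ≤ C)
    (H1 : ∀ x : Φ, ∀ j : Fin n, |h j x - m j x| ≤ C)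
    (H2 : ∀ x : Φ, (∀ i : Fin s, -C ≤ q i x) ∧
      ∃ i0 : Fin s, ∀ i : Fin s, i ≠ i0 → q i x ≤ C)
    (H3 : ∀ x : Φ, |(∑ i : Fin s, q i x) -
      Finset.univ.inf' ⟨⟨0, hn⟩, Finset.mem_univ _⟩ (fun j => m j x)| ≤ C) :
    ∀ x : Φ, ∃ (j0 : Fin n) (i0 : Fin s),
      m j0 x = Finset.univ.inf' ⟨⟨0, hn⟩, Finset.mem_univ _⟩ (fun j => m j x) ∧
      |h j0 x - q i0 x| ≤ (2 * n + s) * C := by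
  intro x
  obtain ⟨j0, -, hj0⟩ := Finset.exists_mem_eq_inf' (⟨⟨0, hn⟩, Finset.mem_univ _⟩ :
    Finset.univ.Nonempty) (fun j => m j x)
  obtain ⟨hlow, i0, hi0⟩ := H2 x
  refine ⟨j0, i0, hj0.symm, ?_⟩
  have hsum : (∑ i : Fin s, q i x) = q i0 x + ∑ i ∈ Finset.univ.erase i0, q i x := by
    rw [← Finset.add_sum_erase _ _ (Finset.mem_univ i0)]
  have hcard : (Finset.univ.erase i0).card = s - 1 := by
    rw [Finset.card_erase_of_mem (Finset.mem_univ i0), Finset.card_univ, Fintype.card_fin]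
  have hrest : |∑ i ∈ Finset.univ.erase i0, q i x| ≤ (s - 1 : ℕ) * C := by
    calc |∑ i ∈ Finset.univ.erase i0, q i x| ≤ ∑ i ∈ Finset.univ.erase i0, |q i x| :=
          Finset.abs_sum_le_sum_abs _ _
      _ ≤ ∑ i ∈ Finset.univ.erase i0, C := by
          refine Finset.sum_le_sum fun i hi => ?_
          exact abs_le.mpr ⟨hlow i, hi0 i (Finset.ne_of_mem_erase hi)⟩
      _ = (s - 1 : ℕ) * C := by rw [Finset.sum_const, hcard, nsmul_eq_mul]
  have h1 := H1 x j0
  have h3 := H3 x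
  rw [hj0] at h3
  have key : |h j0 x - q i0 x| ≤ C + C + (s - 1 : ℕ) * C := by
    have : h j0 x - q i0 x = (h j0 x - m j0 x) + (m j0 x - ∑ i : Fin s, q i x)
        + (∑ i ∈ Finset.univ.erase i0, q i x) := by rw [hsum]; ring
    rw [this]
    calc |(h j0 x - m j0 x) + (m j0 x - ∑ i : Fin s, q i x)
          + (∑ i ∈ Finset.univ.erase i0, q i x)|
        ≤ |(h j0 x - m j0 x) + (m j0 x - ∑ i : Fin s, q i x)|
          + |∑ i ∈ Finset.univ.erase i0, q i x| := abs_add_le _ _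
      _ ≤ |h j0 x - m j0 x| + |m j0 x - ∑ i : Fin s, q i x|
          + |∑ i ∈ Finset.univ.erase i0, q i x| := by gcongr; exact abs_add_le _ _
      _ ≤ C + C + (s - 1 : ℕ) * C := by
          gcongr
          rw [abs_sub_comm]; exact h3
  refine key.trans ?_
  have hs1 : ((s - 1 : ℕ) : ℝ) ≤ (s : ℝ) - 1 + 0 := by
    push_cast [Nat.cast_sub hs]; simp
  have hn1 : (1 : ℝ) ≤ n := by exact_mod_cast hn
  nlinarith [Nat.cast_sub hs (R := ℝ)]
end

section
/- Siegel-type construction of an auxiliary polynomial: Let K be a field, let n ≥ 1, d ≥ 1, s, μ be natural numbers, and let p_1, …, p_d be points of K^n. If Nat.choose (n + s) n > d * Nat.choose (n + μ) n, then there exists a nonzero polynomial f in n variables over K with total degree at most s such that for every i ∈ {1,…,d}, every monomial occurring in the translated polynomial f(X + p_i) has total degree at least μ + 1 (i.e., f vanishes at each p_i with multiplicity greater than μ). (This is the existence of the divisor D with multiplicity at least μ along the d geometric points of Y in the proof of the GCD bound.) -/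
open MvPolynomial Finset

/-- The finset of exponent vectors in `n` variables with total degree at most `t`. -/
def Tset (n t : ℕ) : Finset (Fin n → ℕ) :=
  (Fintype.piFinset fun _ => Finset.range (t + 1)).filter fun f => ∑ i, f i ≤ t

lemma mem_Tset {n t : ℕ} {f : Fin n → ℕ} : f ∈ Tset n t ↔ ∑ i, f i ≤ t := by
  constructor
  · exact fun h => (Finset.mem_filter.mp h).2
  · intro h
    refine Finset.mem_filter.mpr ⟨Fintype.mem_piFinset.mpr fun i => ?_, h⟩
    rw [Finset.mem_range]
    exact lt_of_le_of_lt
      (le_trans (Finset.single_le_sum (fun _ _ => Nat.zero_le _) (Finset.mem_univ i)) h)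
      (Nat.lt_succ_self t)

lemma sum_choose_aux (n t : ℕ) :
    ∑ j ∈ Finset.range (t + 1), Nat.choose (n + j) n = Nat.choose (n + t + 1) (n + 1) := by
  induction t with
  | zero => simp
  | succ t ih =>
      rw [Finset.sum_range_succ, ih]
      show Nat.choose (n + t + 1) (n + 1) + Nat.choose (n + t + 1) n
        = Nat.choose (n + t + 1 + 1) (n + 1)
      rw [Nat.choose_succ_succ' (n + t + 1) n]
      omega

lemma card_Tset (n t : ℕ) : (Tset n t).card = Nat.choose (n + t) n := by
  induction n generalizing t with
  | zero =>
      rw [Nat.zero_add, Nat.choose_zero_right, Finset.card_eq_one]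
      refine ⟨fun i => i.elim0, ?_⟩
      ext f
      simp only [Finset.mem_singleton, mem_Tset]
      constructor
      · intro _; funext i; exact i.elim0
      · intro _; simp
  | succ n ih =>
      have hmem : ∀ f ∈ Tset (n + 1) t, f 0 ∈ Finset.range (t + 1) := by
        intro f hf
        rw [mem_Tset] at hf
        rw [Finset.mem_range, Nat.lt_succ_iff]
        exact le_trans (Finset.single_le_sum (fun _ _ => Nat.zero_le _) (Finset.mem_univ 0)) hf
      rw [Finset.card_eq_sum_card_fiberwise hmem]
      have key : ∀ a ∈ Finset.range (t + 1),
          ((Tset (n + 1) t).filter fun f => f 0 = a).card = (Tset n (t - a)).card := by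
        intro a ha
        rw [Finset.mem_range, Nat.lt_succ_iff] at ha
        apply Finset.card_nbij' Fin.tail (Fin.cons a)
        · intro f hf
          rw [Finset.mem_coe, Finset.mem_filter, mem_Tset] at hf
          rw [Finset.mem_coe, mem_Tset]
          have hsum : ∑ i : Fin (n + 1), f i = f 0 + ∑ i : Fin n, Fin.tail f i := by
            rw [Fin.sum_univ_succ]; rfl
          omega
        · intro g hg
          rw [Finset.mem_coe, mem_Tset] at hg
          rw [Finset.mem_coe, Finset.mem_filter, mem_Tset]
          refine ⟨?_, by simp⟩
          rw [Fin.sum_univ_succ]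
          simp only [Fin.cons_zero, Fin.cons_succ]
          omega
        · intro f hf
          rw [Finset.mem_coe, Finset.mem_filter] at hf
          rw [← hf.2]
          exact Fin.cons_self_tail f
        · intro g _
          simp
      rw [Finset.sum_congr rfl key]
      simp_rw [ih]
      have hr : ∑ a ∈ Finset.range (t + 1), Nat.choose (n + (t - a)) n
          = ∑ j ∈ Finset.range (t + 1), Nat.choose (n + j) n := by
        have := Finset.sum_range_reflect (fun j => Nat.choose (n + j) n) (t + 1)
        simpa using this
      rw [hr, sum_choose_aux, show n + 1 + t = n + t + 1 by omega]

/-- **Siegel-type construction of an auxiliary polynomial.**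
Let `K` be a field, `n ≥ 1`, `d ≥ 1`, `s, μ` natural numbers, and let
`p 1, …, p d` be points of `K^n`. If `C(n + s, n) > d * C(n + μ, n)`, then there is a
nonzero polynomial `f` in `n` variables over `K` of total degree at most `s` such
that, for each `i`, every monomial occurring in the translate `f(X + p i)` has total
degree at least `μ + 1`; that is, `f` vanishes at each `p i` with multiplicity
greater than `μ`. -/
theorem siegel_auxiliary_polynomial (K : Type*) [Field K]
    (n d s μ : ℕ) (hn : 1 ≤ n) (hd : 1 ≤ d)
    (p : Fin d → Fin n → K)
    (hdim : d * Nat.choose (n + μ) n < Nat.choose (n + s) n) :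
    ∃ f : MvPolynomial (Fin n) K, f ≠ 0 ∧ f.totalDegree ≤ s ∧
      ∀ i : Fin d,
        ∀ e ∈ (MvPolynomial.aeval
            (fun k : Fin n => MvPolynomial.X k + MvPolynomial.C (p i k)) f).support,
          μ + 1 ≤ ∑ k : Fin n, e k := by
  classical
  -- the linear map sending a coefficient vector to the corresponding polynomial
  set E : (Fin n → ℕ) → (Fin n →₀ ℕ) := fun g => Finsupp.equivFunOnFinite.symm g with hE
  set toPoly : ({x // x ∈ Tset n s} → K) →ₗ[K] MvPolynomial (Fin n) K :=
    ∑ g : {x // x ∈ Tset n s},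
      (LinearMap.toSpanSingleton K _ (MvPolynomial.monomial (E (g : Fin n → ℕ)) 1)).comp
        (LinearMap.proj g) with htoPoly
  have htoPoly_apply : ∀ c, toPoly c
      = ∑ g : {x // x ∈ Tset n s}, c g • MvPolynomial.monomial (E (g : Fin n → ℕ)) (1 : K) := by
    intro c
    rw [htoPoly]
    simp [LinearMap.sum_apply, LinearMap.toSpanSingleton_apply]
  have hcoeff : ∀ (c : {x // x ∈ Tset n s} → K) (g0 : {x // x ∈ Tset n s}),
      MvPolynomial.coeff (E (g0 : Fin n → ℕ)) (toPoly c) = c g0 := by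
    intro c g0
    rw [htoPoly_apply, MvPolynomial.coeff_sum]
    simp only [MvPolynomial.coeff_smul, MvPolynomial.coeff_monomial, smul_eq_mul, mul_ite,
      mul_one, mul_zero]
    have : ∀ g : {x // x ∈ Tset n s},
        (if E (g : Fin n → ℕ) = E (g0 : Fin n → ℕ) then c g else 0)
          = if g = g0 then c g else 0 := by
      intro g
      congr 1
      simp [hE, Subtype.coe_inj]
    rw [Finset.sum_congr rfl fun g _ => this g]
    simp
  -- the linear conditions
  set φ : ({x // x ∈ Tset n s} → K) →ₗ[K] ((Fin d × {x // x ∈ Tset n μ}) → K) :=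
    (LinearMap.pi fun x : Fin d × {x // x ∈ Tset n μ} =>
      (MvPolynomial.lcoeff K (E (x.2 : Fin n → ℕ))).comp
        (MvPolynomial.aeval
          (fun k : Fin n => MvPolynomial.X k + MvPolynomial.C (p x.1 k))).toLinearMap).comp
      toPoly with hφ
  have dimlt : Module.finrank K ((Fin d × {x // x ∈ Tset n μ}) → K)
      < Module.finrank K ({x // x ∈ Tset n s} → K) := by
    rw [Module.finrank_fintype_fun_eq_card, Module.finrank_fintype_fun_eq_card,
      Fintype.card_prod, Fintype.card_coe, Fintype.card_coe, Fintype.card_fin,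
      card_Tset, card_Tset]
    exact hdim
  obtain ⟨c, hc0, hcker⟩ : ∃ c, c ≠ 0 ∧ φ c = 0 := by
    by_contra h
    push_neg at h
    have hinj : Function.Injective φ := by
      rw [← LinearMap.ker_eq_bot, LinearMap.ker_eq_bot']
      intro c hc
      by_contra hc0
      exact (h c hc0) hc
    exact absurd (LinearMap.finrank_le_finrank_of_injective hinj) (not_le.mpr dimlt)
  refine ⟨toPoly c, ?_, ?_, ?_⟩
  · -- nonzero
    obtain ⟨g0, hg0⟩ : ∃ g0, c g0 ≠ 0 := by
      by_contra h
      push_neg at h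
      exact hc0 (funext h)
    intro hf0
    apply hg0
    rw [← hcoeff c g0, hf0, MvPolynomial.coeff_zero]
  · -- degree
    rw [htoPoly_apply]
    refine le_trans (MvPolynomial.totalDegree_finset_sum _ _) (Finset.sup_le fun g _ => ?_)
    refine le_trans (MvPolynomial.totalDegree_smul_le _ _) ?_
    rw [MvPolynomial.totalDegree_monomial _ (one_ne_zero (α := K))]
    have : (E (g : Fin n → ℕ)).sum (fun _ e => e) = ∑ i, (g : Fin n → ℕ) i := by
      rw [Finsupp.sum_fintype _ _ (fun _ => rfl)]
      simp [hE]
    rw [this]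
    exact mem_Tset.mp g.2
  · -- vanishing conditions
    intro i e he
    by_contra hlt
    push_neg at hlt
    rw [Nat.lt_succ_iff] at hlt
    have hmem : (e : Fin n → ℕ) ∈ Tset n μ := mem_Tset.mpr hlt
    have h0 : φ c (i, ⟨(e : Fin n → ℕ), hmem⟩) = 0 := by rw [hcker]; rfl
    rw [hφ] at h0
    simp only [LinearMap.comp_apply, LinearMap.pi_apply, MvPolynomial.lcoeff_apply,
      AlgHom.toLinearMap_apply] at h0
    have hEe : E ((e : Fin n → ℕ)) = e := Finsupp.equivFunOnFinite_symm_coe e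
    rw [hEe] at h0
    exact (MvPolynomial.mem_support_iff.mp he) h0
end
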